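/- Suppose (a, b, c) is a Pythagorean triple (positive integers with a^2 + b^2 = c^2) such that ν₂(a) > ν₂(b) ≥ 1, where ν₂ denotes the 2-adic valuation. Then there exist unique positive integers ℓ, m, n such that (a, b, c) = (ℓ(m² − n²), ℓ·2mn, ℓ(m² + n²)); moreover these satisfy m > n, and m and n are both odd and coprime. -/

import Mathlib

set_option maxHeartbeats 1000000


private lemma aux_unique (l m n l' m' n' : ℕ) (hl : 0 < l) (hl' : 0 < l')
    (hm : 0 < m) (hn : 0 < n) (hm' : 0 < m') (hn' : 0 < n')
    (hnm : n < m) (hnm' : n' < m') (hco : Nat.Coprime m n) (hco' : Nat.Coprime m' n')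
    (h1 : l * (m ^ 2 - n ^ 2) = l' * (m' ^ 2 - n' ^ 2))
    (h2 : l * (m ^ 2 + n ^ 2) = l' * (m' ^ 2 + n' ^ 2)) :
    l = l' ∧ m = m' ∧ n = n' := by
  have q : n ^ 2 ≤ m ^ 2 := Nat.pow_le_pow_left hnm.le 2
  have q' : n' ^ 2 ≤ m' ^ 2 := Nat.pow_le_pow_left hnm'.le 2
  have e1 : l * m ^ 2 = l' * m' ^ 2 := by zify [q, q'] at h1 h2 ⊢; linarith
  have e2 : l * n ^ 2 = l' * n' ^ 2 := by zify [q, q'] at h1 h2 ⊢; linarith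
  have e3 : m * n' = m' * n := by
    have e4 : l' * ((m' * n) ^ 2) = l' * ((m * n') ^ 2) := by
      have : (l' * m' ^ 2) * n ^ 2 = (l' * n' ^ 2) * m ^ 2 := by
        rw [← e1, ← e2]; ring
      calc l' * ((m' * n) ^ 2) = (l' * m' ^ 2) * n ^ 2 := by ring
        _ = (l' * n' ^ 2) * m ^ 2 := this
        _ = l' * ((m * n') ^ 2) := by ring
    have e5 : (m' * n) ^ 2 = (m * n') ^ 2 := Nat.eq_of_mul_eq_mul_left hl' e4
    exact (Nat.pow_left_injective (by norm_num) e5).symm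
  have hmm : m = m' := by
    have d1 : m ∣ m' := hco.dvd_of_dvd_mul_right ⟨n', e3.symm⟩
    have d2 : m' ∣ m := hco'.dvd_of_dvd_mul_right ⟨n, e3⟩
    exact Nat.dvd_antisymm d1 d2
  subst hmm
  have hnn : n = n' := (Nat.eq_of_mul_eq_mul_left hm e3).symm
  subst hnn
  exact ⟨Nat.eq_of_mul_eq_mul_right (by positivity) e1, rfl, rfl⟩

/-- If (a, b, c) is a Pythagorean triple with ν₂(a) > ν₂(b) ≥ 1,
then there exist unique positive integers ℓ, m, n with
(a, b, c) = (ℓ(m² − n²), ℓ·2mn, ℓ(m² + n²)); moreover m > n, and m, n are both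
odd and coprime. -/
theorem pythagorean_flipped_param (a b c : ℕ) (ha : 0 < a) (hb : 0 < b) (hc : 0 < c)
    (hpyth : a ^ 2 + b ^ 2 = c ^ 2)
    (hv : padicValNat 2 b < padicValNat 2 a) (hv1 : 1 ≤ padicValNat 2 b) :
    ∃! lmn : ℕ × ℕ × ℕ,
      0 < lmn.1 ∧ 0 < lmn.2.1 ∧ 0 < lmn.2.2 ∧
      a = lmn.1 * (lmn.2.1 ^ 2 - lmn.2.2 ^ 2) ∧
      b = lmn.1 * (2 * lmn.2.1 * lmn.2.2) ∧
      c = lmn.1 * (lmn.2.1 ^ 2 + lmn.2.2 ^ 2) ∧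
      lmn.2.2 < lmn.2.1 ∧ Odd lmn.2.1 ∧ Odd lmn.2.2 ∧
      Nat.Coprime lmn.2.1 lmn.2.2 := by
  -- setup: g = gcd a b
  set g := Nat.gcd a b with hgdef
  have hg : 0 < g := Nat.gcd_pos_of_pos_left _ ha
  have hga : g ∣ a := Nat.gcd_dvd_left a b
  have hgb : g ∣ b := Nat.gcd_dvd_right a b
  have hgc : g ∣ c := by
    have h2 : g ^ 2 ∣ c ^ 2 := by
      rw [← hpyth]
      exact dvd_add (pow_dvd_pow_of_dvd hga 2) (pow_dvd_pow_of_dvd hgb 2)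
    exact (Nat.pow_dvd_pow_iff (by norm_num)).mp h2
  set a1 := a / g with ha1def
  set b1 := b / g with hb1def
  set c1 := c / g with hc1def
  have haa : a = g * a1 := (Nat.mul_div_cancel' hga).symm
  have hbb : b = g * b1 := (Nat.mul_div_cancel' hgb).symm
  have hcc : c = g * c1 := (Nat.mul_div_cancel' hgc).symm
  have ha1 : 0 < a1 := Nat.div_pos (Nat.le_of_dvd ha hga) hg
  have hb1 : 0 < b1 := Nat.div_pos (Nat.le_of_dvd hb hgb) hg
  have hc1 : 0 < c1 := Nat.div_pos (Nat.le_of_dvd hc hgc) hg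
  have cop : Nat.Coprime a1 b1 := Nat.coprime_div_gcd_div_gcd hg
  have hpyth1 : a1 ^ 2 + b1 ^ 2 = c1 ^ 2 := by
    have := hpyth
    rw [haa, hbb, hcc] at this
    have h2 : g ^ 2 * (a1 ^ 2 + b1 ^ 2) = g ^ 2 * c1 ^ 2 := by ring_nf; ring_nf at this; linarith
    exact Nat.eq_of_mul_eq_mul_left (by positivity) h2
  -- valuations
  have hva : padicValNat 2 a = padicValNat 2 g + padicValNat 2 a1 := by
    rw [haa]; exact padicValNat.mul hg.ne' ha1.ne'
  have hvb : padicValNat 2 b = padicValNat 2 g + padicValNat 2 b1 := by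
    rw [hbb]; exact padicValNat.mul hg.ne' hb1.ne'
  have hv1' : padicValNat 2 b1 < padicValNat 2 a1 := by omega
  have hb1odd : ¬ 2 ∣ b1 := by
    intro h2b
    have h1 : 1 ≤ padicValNat 2 b1 := one_le_padicValNat_of_dvd hb1.ne' h2b
    have h2 : 2 ∣ a1 := dvd_of_one_le_padicValNat (by omega)
    have hd2 := Nat.dvd_gcd h2 h2b
    rw [Nat.Coprime] at cop
    omega
  have hvb1 : padicValNat 2 b1 = 0 := padicValNat.eq_zero_of_not_dvd hb1odd
  have h2g : 2 ∣ g := dvd_of_one_le_padicValNat (by omega)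
  -- primitive triple over ℤ with x = b1 odd
  have hPT : PythagoreanTriple (b1 : ℤ) (a1 : ℤ) (c1 : ℤ) := by
    have h : (a1 : ℤ) ^ 2 + (b1 : ℤ) ^ 2 = (c1 : ℤ) ^ 2 := by exact_mod_cast hpyth1
    show (b1 : ℤ) * b1 + a1 * a1 = c1 * c1
    nlinarith [h]
  have hcop' : Int.gcd (b1 : ℤ) (a1 : ℤ) = 1 := by
    rw [Int.gcd_natCast_natCast]
    exact Nat.Coprime.gcd_eq_one cop.symm
  have hpar : (b1 : ℤ) % 2 = 1 := by omega
  obtain ⟨M, N, hx, hy, hz, hMN, hpar2, hM0⟩ :=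
    PythagoreanTriple.coprime_classification' hPT hcop' hpar (by exact_mod_cast hc1)
  -- positivity of M, N
  have hMpos : 0 < M := by nlinarith [hy, ha1, sq_nonneg N]
  have hNpos : 0 < N := by nlinarith [hy, ha1]
  have hNM : N < M := by nlinarith [hx, hb1]
  set M' := M.toNat with hM'def
  set N' := N.toNat with hN'def
  have hMc : (M' : ℤ) = M := Int.toNat_of_nonneg hMpos.le
  have hNc : (N' : ℤ) = N := Int.toNat_of_nonneg hNpos.le
  have hN'M' : N' < M' := by
    have h : (N' : ℤ) < (M' : ℤ) := by rw [hMc, hNc]; exact hNM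
    exact_mod_cast h
  have hN'pos : 0 < N' := by
    have h : (0 : ℤ) < (N' : ℤ) := by rw [hNc]; exact hNpos
    exact_mod_cast h
  -- the witness
  obtain ⟨l, hl⟩ := h2g
  have hlpos : 0 < l := by omega
  have hparn : M' % 2 + N' % 2 = 1 := by
    rcases hpar2 with ⟨h1, h2⟩ | ⟨h1, h2⟩ <;> omega
  have hgl : (g : ℤ) = 2 * l := by exact_mod_cast hl
  have hle : (M' - N') ^ 2 ≤ (M' + N') ^ 2 := Nat.pow_le_pow_left (by omega) 2
  have eA : a = l * ((M' + N') ^ 2 - (M' - N') ^ 2) := by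
    zify [hle, hN'M'.le]
    have h : (a : ℤ) = g * (2 * M * N) := by rw [haa]; push_cast; rw [hy]
    rw [h, hgl, ← hMc, ← hNc]; ring
  have eB : b = l * (2 * (M' + N') * (M' - N')) := by
    zify [hN'M'.le]
    have h : (b : ℤ) = g * (M ^ 2 - N ^ 2) := by rw [hbb]; push_cast; rw [hx]
    rw [h, hgl, ← hMc, ← hNc]; ring
  have eC : c = l * ((M' + N') ^ 2 + (M' - N') ^ 2) := by
    zify [hN'M'.le]
    have h : (c : ℤ) = g * (M ^ 2 + N ^ 2) := by rw [hcc]; push_cast; rw [hz]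
    rw [h, hgl, ← hMc, ← hNc]; ring
  have hOm : Odd (M' + N') := by rw [Nat.odd_iff]; omega
  have hOn : Odd (M' - N') := by rw [Nat.odd_iff]; omega
  have hcopW : Nat.Coprime (M' + N') (M' - N') := by
    have hgcdMN : Nat.gcd M' N' = 1 := by
      have h : Int.gcd M N = Nat.gcd M' N' := by
        rw [Int.gcd, ← hMc, ← hNc, Int.natAbs_natCast, Int.natAbs_natCast]
      omega
    have hd : Nat.gcd (M' + N') (M' - N') ∣ 2 := by
      have h1 : Nat.gcd (M' + N') (M' - N') ∣ 2 * M' := by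
        have h := Nat.dvd_add (Nat.gcd_dvd_left (M' + N') (M' - N'))
          (Nat.gcd_dvd_right (M' + N') (M' - N'))
        have heq : M' + N' + (M' - N') = 2 * M' := by omega
        rwa [heq] at h
      have h2 : Nat.gcd (M' + N') (M' - N') ∣ 2 * N' := by
        have h := Nat.dvd_sub (Nat.gcd_dvd_left (M' + N') (M' - N'))
          (Nat.gcd_dvd_right (M' + N') (M' - N'))
        have heq : M' + N' - (M' - N') = 2 * N' := by omega
        rwa [heq] at h
      have h3 := Nat.dvd_gcd h1 h2
      rwa [Nat.gcd_mul_left, hgcdMN, mul_one] at h3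
    have hdodd : ¬ 2 ∣ Nat.gcd (M' + N') (M' - N') := by
      intro h2d
      have h := h2d.trans (Nat.gcd_dvd_left (M' + N') (M' - N'))
      omega
    rcases (Nat.dvd_prime Nat.prime_two).mp hd with h | h
    · exact h
    · exact absurd (h ▸ dvd_refl _) hdodd
  refine ⟨(l, M' + N', M' - N'),
    ⟨hlpos, (show 0 < M' + N' by omega), (show 0 < M' - N' by omega), eA, eB, eC,
      (show M' - N' < M' + N' by omega), hOm, hOn, hcopW⟩, ?_⟩
  rintro ⟨l', m, n⟩ ⟨hl', hm, hn, hA, hB, hC, hnm, hmo, hno, hco⟩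
  have h1 : l' * (m ^ 2 - n ^ 2) = l * ((M' + N') ^ 2 - (M' - N') ^ 2) :=
    hA.symm.trans eA
  have h2 : l' * (m ^ 2 + n ^ 2) = l * ((M' + N') ^ 2 + (M' - N') ^ 2) :=
    hC.symm.trans eC
  obtain ⟨hle1, hle2, hle3⟩ := aux_unique l' m n l (M' + N') (M' - N') hl' hlpos hm hn
    (by omega) (by omega) hnm (by omega) hco hcopW h1 h2
  simp only [Prod.mk.injEq]
  exact ⟨hle1, hle2, hle3⟩
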